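/- Suppose the completion Ḡ of an edge-weighted graph G is weakly connected. If U and V are disjoint compact subsets of Ḡ, then there is a finite set W of edges of G such that every path from a point of U to a point of V contains an edge of W. -/

import Mathlib

open UniformSpace Filter Topology
open scoped ENNReal

noncomputable section

/-- A locally finite edge-weighted (resistance) graph. -/
structure WGraph (V : Type*) where
  Adj : V → V → Prop
  symm : ∀ u v, Adj u v → Adj v u
  loopless : ∀ v, ¬ Adj v v
  R : V → V → ℝ
  Rsymm : ∀ u v, R u v = R v u
  Rpos : ∀ u v, Adj u v → 0 < R u v
  locFin : ∀ v, {u | Adj u v}.Finite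

namespace WGraph

variable {V : Type*} (G : WGraph V)

/-- The set of edges, as unordered pairs of vertices. -/
def edgeSet : Set (Sym2 V) := {e | ∃ u v, G.Adj u v ∧ e = s(u, v)}

/-- The set of total lengths of finite paths joining `u` to `v`. -/
def pathLengths (u v : V) : Set ℝ :=
  {L | ∃ (n : ℕ) (p : ℕ → V), p 0 = u ∧ p n = v ∧
        (∀ k < n, G.Adj (p k) (p (k + 1))) ∧
        L = ∑ k ∈ Finset.range n, G.R (p k) (p (k + 1))}

/-- `G` is connected: any two vertices are joined by a finite path. -/
def Connected : Prop := ∀ u v : V, (G.pathLengths u v).Nonempty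

/-- The metric on the vertex set is the minimal resistance path metric of `G`. -/
def IsPathMetric [MetricSpace V] : Prop :=
  ∀ u v : V, dist u v = sInf (G.pathLengths u v)

/-- Eventually flat functions: the values differ across only finitely many edges. -/
def EventuallyFlat (φ : V → ℝ) : Prop :=
  {p : V × V | G.Adj p.1 p.2 ∧ φ p.1 ≠ φ p.2}.Finite

open Classical in
/-- The conductance: the reciprocal resistance on edges, `0` off edges. -/
def cond (u v : V) : ℝ := if G.Adj u v then (G.R u v)⁻¹ else 0

/-- `f` is harmonic at `v`: its value is the conductance-weighted average of the
values at the adjacent vertices. -/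
def HarmonicAt (f : V → ℝ) (v : V) : Prop :=
  f v = (∑ u ∈ (G.locFin v).toFinset, G.cond u v)⁻¹ *
          ∑ u ∈ (G.locFin v).toFinset, G.cond u v * f u

/-- The weighted `ℓ²(μ)` inner product. -/
def winner (μ : V → ℝ) (f g : V → ℝ) : ℝ := ∑' v, f v * g v * μ v

/-- The bilinear (energy) form associated to conductances `C`. -/
def Bform (C : V → V → ℝ) (f g : V → ℝ) : ℝ :=
  (1 / 2) * ∑' p : V × V, C p.1 p.2 * (f p.1 - f p.2) * (g p.1 - g p.2)

/-- The formal Laplacian `Δ_μ`. -/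
def lap (C : V → V → ℝ) (μ : V → ℝ) (f : V → ℝ) (v : V) : ℝ :=
  (1 / μ v) * ∑' u, C u v * (f v - f u)

/-- The (possibly infinite) energy of `f`. -/
def energy (C : V → V → ℝ) (f : V → ℝ) : ℝ≥0∞ :=
  (1 / 2) * ∑' p : V × V, ENNReal.ofReal (C p.1 p.2 * (f p.1 - f p.2) ^ 2)

variable [MetricSpace V]

/-- A path in the completion `Ḡ` joining `x` and `y`: a two-sided sequence of
vertices (stationary steps are allowed, so this encodes finite paths, rays and
double rays) converging to `x` and `y` at its two ends. -/
structure CPath (x y : Completion V) where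
  p : ℤ → V
  step : ∀ k, p k = p (k + 1) ∨ G.Adj (p k) (p (k + 1))
  tendsto_left : Tendsto (fun n : ℕ => ((p (-(n : ℤ)) : V) : Completion V)) atTop (nhds x)
  tendsto_right : Tendsto (fun n : ℕ => ((p (n : ℤ) : V) : Completion V)) atTop (nhds y)

end WGraph

/-- The path `γ` uses (contains) the edge `e`. -/
def WGraph.CPath.uses {V : Type*} [MetricSpace V] {G : WGraph V}
    {x y : Completion V} (γ : G.CPath x y) (e : Sym2 V) : Prop :=
  ∃ k : ℤ, γ.p k ≠ γ.p (k + 1) ∧ e = s(γ.p k, γ.p (k + 1))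

namespace WGraph

variable {V : Type*} (G : WGraph V) [MetricSpace V]

/-- The completion `Ḡ` is weakly connected: any two distinct points admit a
finite set of edges met by every path joining them. -/
def WeaklyConnected : Prop :=
  ∀ x y : Completion V, x ≠ y →
    ∃ W : Set (Sym2 V), W.Finite ∧ W ⊆ G.edgeSet ∧
      ∀ γ : G.CPath x y, ∃ e ∈ W, γ.uses e

end WGraph


/-! ### Auxiliary lemmas -/

namespace WGraph

variable {V : Type*} {G : WGraph V}

lemma pathLengths_nonneg {u v : V} {L : ℝ} (h : L ∈ G.pathLengths u v) : 0 ≤ L := by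
  obtain ⟨n, p, _, _, hadj, hL⟩ := h
  subst hL
  exact Finset.sum_nonneg fun k hk =>
    le_of_lt (G.Rpos _ _ (hadj k (Finset.mem_range.mp hk)))

lemma bddBelow_pathLengths (u v : V) : BddBelow (G.pathLengths u v) :=
  ⟨0, fun _ h => pathLengths_nonneg h⟩

variable [MetricSpace V]

lemma dist_le_of_mem_pathLengths (hmet : G.IsPathMetric) {u v : V} {L : ℝ}
    (h : L ∈ G.pathLengths u v) : dist u v ≤ L := by
  rw [hmet u v]
  exact csInf_le (bddBelow_pathLengths u v) h

/-- Short paths avoid a finite edge set whose edges all have resistance ≥ r. -/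
lemma exists_short_path (hmet : G.IsPathMetric) (hconn : G.Connected)
    {W : Set (Sym2 V)} {r : ℝ}
    (hr : ∀ e ∈ W, ∀ a b : V, e = s(a, b) → r ≤ G.R a b)
    {u v : V} {ε : ℝ} (hε : ε ≤ r) (h : dist u v < ε) :
    ∃ (n : ℕ) (p : ℕ → V), p 0 = u ∧ p n = v ∧
      (∀ k < n, G.Adj (p k) (p (k + 1)) ∧ s(p k, p (k + 1)) ∉ W) ∧
      ∀ j ≤ n, dist u (p j) < ε := by
  have hne := hconn u v
  rw [hmet u v] at h
  obtain ⟨L, hL, hLε⟩ := exists_lt_of_csInf_lt hne h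
  obtain ⟨n, p, hp0, hpn, hadj, hsum⟩ := hL
  subst hsum
  have hterm : ∀ k ∈ Finset.range n, 0 ≤ G.R (p k) (p (k + 1)) := fun k hk =>
    le_of_lt (G.Rpos _ _ (hadj k (Finset.mem_range.mp hk)))
  refine ⟨n, p, hp0, hpn, fun k hk => ⟨hadj k hk, fun hmem => ?_⟩, fun j hj => ?_⟩
  · have h1 : r ≤ G.R (p k) (p (k + 1)) := hr _ hmem _ _ rfl
    have h2 : G.R (p k) (p (k + 1)) ≤ ∑ i ∈ Finset.range n, G.R (p i) (p (i + 1)) :=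
      Finset.single_le_sum hterm (Finset.mem_range.mpr hk)
    linarith
  · have hmem : (∑ i ∈ Finset.range j, G.R (p i) (p (i + 1))) ∈ G.pathLengths u (p j) :=
      ⟨j, p, hp0, rfl, fun k hk => hadj k (lt_of_lt_of_le hk hj), rfl⟩
    have h1 := dist_le_of_mem_pathLengths hmet hmem
    have h2 : (∑ i ∈ Finset.range j, G.R (p i) (p (i + 1))) ≤
        ∑ i ∈ Finset.range n, G.R (p i) (p (i + 1)) :=
      Finset.sum_le_sum_of_subset_of_nonneg
        (Finset.range_subset_range.mpr hj) (fun i hi _ => hterm i hi)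
    linarith

end WGraph

/-- A walker through a sequence of pieces of lengths `len n`. -/
def WGraph.walker (len : ℕ → ℕ) : ℕ → ℕ × ℕ
  | 0 => (0, 0)
  | m + 1 =>
      let g := WGraph.walker len m
      if g.2 + 1 < len g.1 then (g.1, g.2 + 1) else (g.1 + 1, 0)

namespace WGraph

variable {len : ℕ → ℕ}

lemma walker_zero : walker len 0 = (0, 0) := rfl

lemma walker_succ_eq (m : ℕ) :
    walker len (m + 1) = (if (walker len m).2 + 1 < len (walker len m).1
      then ((walker len m).1, (walker len m).2 + 1) else ((walker len m).1 + 1, 0)) := rfl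

lemma walker_snd_lt (hlen : ∀ n, 1 ≤ len n) : ∀ m, (walker len m).2 < len (walker len m).1 := by
  intro m
  induction m with
  | zero => exact hlen 0
  | succ m ih =>
      rw [walker_succ_eq]
      by_cases h : (walker len m).2 + 1 < len (walker len m).1
      · simpa [h] using h
      · simpa [h, Nat.pos_iff_ne_zero, Nat.one_le_iff_ne_zero] using hlen _

lemma walker_index (hlen : ∀ n, 1 ≤ len n) :
    ∀ m, m = (∑ i ∈ Finset.range (walker len m).1, len i) + (walker len m).2 := by
  intro m
  induction m with
  | zero => simp [walker_zero]
  | succ m ih =>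
      have hlt := walker_snd_lt hlen m
      rw [walker_succ_eq]
      by_cases h : (walker len m).2 + 1 < len (walker len m).1
      · simp only [h, if_pos]
        omega
      · simp only [h, if_neg, not_false_iff]
        have heq : (walker len m).2 + 1 = len (walker len m).1 := by omega
        rw [Finset.sum_range_succ]
        omega

lemma walker_fst_ge (hlen : ∀ n, 1 ≤ len n) {n m : ℕ}
    (h : (∑ i ∈ Finset.range n, len i) ≤ m) : n ≤ (walker len m).1 := by
  by_contra hc
  push_neg at hc
  have h1 := walker_index hlen m
  have h2 := walker_snd_lt hlen m
  have h3 : Finset.range ((walker len m).1 + 1) ⊆ Finset.range n :=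
    Finset.range_subset_range.mpr (by omega)
  have h4 : (∑ i ∈ Finset.range ((walker len m).1 + 1), len i) ≤ ∑ i ∈ Finset.range n, len i :=
    Finset.sum_le_sum_of_subset h3
  rw [Finset.sum_range_succ] at h4
  omega

end WGraph

namespace WGraph

variable {V : Type*} {G : WGraph V} [MetricSpace V]

/-- From any vertex at distance `< r/4` from `x`, there is a one-sided path
converging to `x` and avoiding the finite edge set `W` (whose edges all have
resistance at least `r`). -/
lemma exists_ray (hmet : G.IsPathMetric) (hconn : G.Connected)
    {W : Set (Sym2 V)} {r : ℝ} (hrpos : 0 < r)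
    (hr : ∀ e ∈ W, ∀ a b : V, e = s(a, b) → r ≤ G.R a b)
    (x : Completion V) (v0 : V) (h0 : dist (v0 : Completion V) x < r / 4) :
    ∃ q : ℕ → V, q 0 = v0 ∧
      (∀ m, q m = q (m + 1) ∨ (G.Adj (q m) (q (m + 1)) ∧ s(q m, q (m + 1)) ∉ W)) ∧
      Tendsto (fun m => ((q m : V) : Completion V)) atTop (nhds x) := by
  -- choose approximating vertices
  have hchoice : ∀ n : ℕ, ∃ v : V, dist ((v : Completion V)) x < r / 2 ^ (n + 2) := by
    intro n
    obtain ⟨v, hv⟩ := (UniformSpace.Completion.denseRange_coe (α := V)).exists_dist_lt x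
      (show (0:ℝ) < r / 2 ^ (n + 2) by positivity)
    exact ⟨v, by rwa [dist_comm]⟩
  choose b hb using hchoice
  obtain ⟨a, ha0, haS⟩ : ∃ a : ℕ → V, a 0 = v0 ∧ ∀ n, a (n + 1) = b (n + 1) :=
    ⟨fun n => Nat.rec v0 (fun n _ => b (n + 1)) n, rfl, fun n => rfl⟩
  have hax : ∀ n, dist ((a n : V) : Completion V) x < r / 2 ^ (n + 2) := by
    intro n
    cases n with
    | zero => rw [ha0]; exact h0.trans_le (by norm_num)
    | succ n => rw [haS]; exact hb (n + 1)
  -- consecutive vertices are close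
  have hstep : ∀ n, dist (a n) (a (n + 1)) < r / 2 ^ (n + 1) := by
    intro n
    rw [← UniformSpace.Completion.dist_eq]
    have t := dist_triangle ((a n : V) : Completion V) x ((a (n + 1) : V) : Completion V)
    rw [dist_comm x] at t
    have h1 := hax n
    have h2 := hax (n + 1)
    have e0 : r / 2 ^ (n + 1 + 2) ≤ r / 2 ^ (n + 2) := by
      gcongr
      all_goals first | exact hrpos.le | norm_num | omega
    have hA : ((2:ℝ) ^ (n + 1)) ≠ 0 := by positivity
    have e1 : r / 2 ^ (n + 2) + r / 2 ^ (n + 2) = r / 2 ^ (n + 1) := by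
      rw [pow_succ]
      field_simp
      ring
    linarith
  -- connecting short paths
  have hpaths : ∀ n, ∃ (ℓ : ℕ) (p : ℕ → V), p 0 = a n ∧ p ℓ = a (n + 1) ∧
      (∀ k < ℓ, G.Adj (p k) (p (k + 1)) ∧ s(p k, p (k + 1)) ∉ W) ∧
      ∀ j ≤ ℓ, dist (a n) (p j) < r / 2 ^ (n + 1) := fun n =>
    exists_short_path hmet hconn hr
      (div_le_self hrpos.le (one_le_pow₀ (by norm_num))) (hstep n)
  choose ℓ π hπ0 hπe hπadj hπdist using hpaths
  obtain ⟨len, hlena⟩ : ∃ len : ℕ → ℕ, ∀ n, len n = ℓ n + 1 := ⟨fun n => ℓ n + 1, fun _ => rfl⟩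
  have hlen : ∀ n, 1 ≤ len n := fun n => by rw [hlena]; omega
  obtain ⟨q, hqa⟩ : ∃ q : ℕ → V, ∀ m, q m = π (walker len m).1 ((walker len m).2 - 1) :=
    ⟨_, fun _ => rfl⟩
  have hq0 : q 0 = v0 := by rw [hqa, walker_zero]; simpa [hπ0] using ha0
  -- key: q (m+1) = π n j where (n, j) = walker len m
  have hqsucc : ∀ m, q (m + 1) = π (walker len m).1 (walker len m).2 := by
    intro m
    have hj := walker_snd_lt hlen m
    rw [hlena] at hj
    rw [hqa, walker_succ_eq]
    by_cases h : (walker len m).2 + 1 < len (walker len m).1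
    · simp [h]
    · rw [hlena] at h
      have hje : (walker len m).2 = ℓ (walker len m).1 := by omega
      rw [if_neg (by rw [hlena]; omega)]
      simp only [Nat.zero_sub]
      rw [hπ0, ← hπe, hje]
  refine ⟨q, hq0, fun m => ?_, ?_⟩
  · -- step property
    have hj := walker_snd_lt hlen m
    rw [hlena] at hj
    rw [hqsucc m, hqa]
    rcases Nat.eq_zero_or_eq_succ_pred (walker len m).2 with h0' | h0'
    · left
      rw [h0']
    · right
      rw [h0']
      simp only [Nat.succ_sub_one]
      exact hπadj _ _ (by omega)
  · -- convergence
    rw [Metric.tendsto_atTop]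
    intro δ hδ
    obtain ⟨n0, hn0⟩ : ∃ n0 : ℕ, r / 2 ^ n0 < δ := by
      obtain ⟨n, hn⟩ := pow_unbounded_of_one_lt (r / δ) (by norm_num : (1:ℝ) < 2)
      exact ⟨n, by rw [div_lt_iff₀ (by positivity)]; rw [div_lt_iff₀ hδ] at hn; linarith⟩
    refine ⟨∑ i ∈ Finset.range n0, len i, fun m hm => ?_⟩
    have hn : n0 ≤ (walker len m).1 := walker_fst_ge hlen hm
    set n := (walker len m).1 with hn_def
    set j := (walker len m).2 - 1 with hj_def
    have hjlt := walker_snd_lt hlen m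
    rw [hlena] at hjlt
    have hjle : j ≤ ℓ n := by rw [hj_def, hn_def]; omega
    have hd1 : dist (a n) (π n j) < r / 2 ^ (n + 1) := hπdist n _ hjle
    have hd2 := hax n
    have t : dist ((π n j : V) : Completion V) x ≤
        dist (a n) (π n j) + dist ((a n : V) : Completion V) x := by
      have t0 := dist_triangle ((π n j : V) : Completion V) ((a n : V) : Completion V) x
      rwa [UniformSpace.Completion.dist_eq, dist_comm (π n j) (a n)] at t0
    have e0 : r / 2 ^ (n + 2) ≤ r / 2 ^ (n + 1) := by
      gcongr
      all_goals first | exact hrpos.le | norm_num | omega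
    have hA : ((2:ℝ) ^ n) ≠ 0 := by positivity
    have e1 : r / 2 ^ (n + 1) + r / 2 ^ (n + 1) = r / 2 ^ n := by
      rw [pow_succ]
      field_simp
      ring
    have e2 : r / 2 ^ n ≤ r / 2 ^ n0 := by
      apply div_le_div_of_nonneg_left hrpos.le (by positivity)
      exact pow_le_pow_right₀ (by norm_num) hn
    rw [hqa m, ← hj_def, ← hn_def]
    linarith

end WGraph

namespace WGraph

variable {V : Type*} {G : WGraph V} [MetricSpace V]

/-- If a finite edge set `W` (with resistances `≥ r`) separates `x` from `y`,
then it also separates any `x'`, `y'` at distance `< r/8` from `x`, `y`. -/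
lemma separation_ball (hmet : G.IsPathMetric) (hconn : G.Connected)
    {W : Set (Sym2 V)} {r : ℝ} (hrpos : 0 < r)
    (hr : ∀ e ∈ W, ∀ a b : V, e = s(a, b) → r ≤ G.R a b)
    {x y : Completion V}
    (hsep : ∀ γ : G.CPath x y, ∃ e ∈ W, γ.uses e)
    {x' y' : Completion V} (hx : dist x x' < r / 8) (hy : dist y y' < r / 8)
    (γ : G.CPath x' y') : ∃ e ∈ W, γ.uses e := by
  by_contra hno
  push_neg at hno
  have hγW : ∀ k : ℤ, γ.p k = γ.p (k + 1) ∨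
      (G.Adj (γ.p k) (γ.p (k + 1)) ∧ s(γ.p k, γ.p (k + 1)) ∉ W) := by
    intro k
    rcases γ.step k with h | h
    · exact Or.inl h
    · refine Or.inr ⟨h, fun hmem => ?_⟩
      have hne : γ.p k ≠ γ.p (k + 1) := fun he => G.loopless _ (he ▸ h)
      exact hno _ hmem ⟨k, hne, rfl⟩
  -- tails of γ enter the r/8-balls
  obtain ⟨N, hN⟩ := (Metric.tendsto_atTop.mp γ.tendsto_left) (r / 8) (by positivity)
  obtain ⟨M, hM⟩ := (Metric.tendsto_atTop.mp γ.tendsto_right) (r / 8) (by positivity)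
  have hNx : dist ((γ.p (-(N : ℤ)) : V) : Completion V) x < r / 4 := by
    have h1 := hN N le_rfl
    have t := dist_triangle ((γ.p (-(N : ℤ)) : V) : Completion V) x' x
    rw [dist_comm x' x] at t
    linarith
  have hMy : dist ((γ.p (M : ℤ) : V) : Completion V) y < r / 4 := by
    have h1 := hM M le_rfl
    have t := dist_triangle ((γ.p (M : ℤ) : V) : Completion V) y' y
    rw [dist_comm y' y] at t
    linarith
  obtain ⟨qL, hqL0, hqLs, hqLt⟩ := exists_ray hmet hconn hrpos hr x (γ.p (-(N : ℤ))) hNx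
  obtain ⟨qR, hqR0, hqRs, hqRt⟩ := exists_ray hmet hconn hrpos hr y (γ.p (M : ℤ)) hMy
  have hNM : -(N : ℤ) ≤ (M : ℤ) := by omega
  -- the assembled path
  obtain ⟨p, hp⟩ : ∃ p : ℤ → V, ∀ k, p k = if k < -(N : ℤ) then qL (-(k + N)).toNat
      else if k ≤ (M : ℤ) then γ.p k else qR (k - M).toNat := ⟨_, fun _ => rfl⟩
  have pL : ∀ k : ℤ, k ≤ -(N : ℤ) → p k = qL (-(k + N)).toNat := by
    intro k hk
    rcases lt_or_eq_of_le hk with h | h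
    · rw [hp, if_pos h]
    · rw [hp, if_neg (by omega), if_pos (by omega), h]
      simp [hqL0]
  have pM : ∀ k : ℤ, -(N : ℤ) ≤ k → k ≤ (M : ℤ) → p k = γ.p k := by
    intro k h1 h2
    rw [hp, if_neg (by omega), if_pos h2]
  have pR : ∀ k : ℤ, (M : ℤ) ≤ k → p k = qR (k - M).toNat := by
    intro k hk
    rcases lt_or_eq_of_le hk with h | h
    · rw [hp, if_neg (by omega), if_neg (by omega)]
    · rw [hp, if_neg (by omega), if_pos (by omega), ← h]
      simp [hqR0]
  have hstepfull : ∀ k : ℤ, p k = p (k + 1) ∨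
      (G.Adj (p k) (p (k + 1)) ∧ s(p k, p (k + 1)) ∉ W) := by
    intro k
    rcases lt_trichotomy k (-(N : ℤ)) with hk | hk | hk
    · -- left tail, reversed
      have h1 : p k = qL (-(k + N)).toNat := pL k hk.le
      have h2 : p (k + 1) = qL (-(k + 1 + N)).toNat := pL (k + 1) (by omega)
      have hb : (-(k + N)).toNat = (-(k + 1 + N)).toNat + 1 := by omega
      rw [h1, h2, hb]
      rcases hqLs (-(k + 1 + N)).toNat with h | ⟨ha, hw'⟩
      · exact Or.inl h.symm
      · exact Or.inr ⟨G.symm _ _ ha, by rwa [Sym2.eq_swap]⟩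
    · -- boundary and middle
      rcases le_or_gt (k + 1) (M : ℤ) with hk2 | hk2
      · rw [pM k (by omega) (by omega), pM (k + 1) (by omega) hk2]
        exact hγW k
      · -- k = M possible only if -N ≤ M = k
        have hkM : (M : ℤ) ≤ k := by omega
        have h1 : p k = qR (k - M).toNat := pR k hkM
        have h2 : p (k + 1) = qR ((k - M).toNat + 1) := by
          rw [pR (k + 1) (by omega)]
          congr 1
          omega
        rw [h1, h2]
        exact hqRs (k - M).toNat
    · rcases le_or_gt (k + 1) (M : ℤ) with hk2 | hk2
      · rw [pM k (by omega) (by omega), pM (k + 1) (by omega) hk2]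
        exact hγW k
      · rcases le_or_gt (M : ℤ) k with hkM | hkM
        · have h1 : p k = qR (k - M).toNat := pR k hkM
          have h2 : p (k + 1) = qR ((k - M).toNat + 1) := by
            rw [pR (k + 1) (by omega)]
            congr 1
            omega
          rw [h1, h2]
          exact hqRs (k - M).toNat
        · rw [pM k (by omega) (by omega), pM (k + 1) (by omega) (by omega)]
          exact hγW k
  have hTL : Tendsto (fun n : ℕ => ((p (-(n : ℤ)) : V) : Completion V)) atTop (nhds x) := by
    apply Tendsto.congr' _ (hqLt.comp (tendsto_sub_atTop_nat N))
    filter_upwards [eventually_ge_atTop N] with n hn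
    have : p (-(n : ℤ)) = qL ((-(-(n : ℤ) + N)).toNat) := pL _ (by omega)
    rw [this]
    have : (-(-(n : ℤ) + N)).toNat = n - N := by omega
    rw [this]
    rfl
  have hTR : Tendsto (fun n : ℕ => ((p (n : ℤ) : V) : Completion V)) atTop (nhds y) := by
    apply Tendsto.congr' _ (hqRt.comp (tendsto_sub_atTop_nat M))
    filter_upwards [eventually_ge_atTop M] with n hn
    have : p (n : ℤ) = qR (((n : ℤ) - M).toNat) := pR _ (by omega)
    rw [this]
    have : ((n : ℤ) - M).toNat = n - M := by omega
    rw [this]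
    rfl
  obtain ⟨e, heW, k, hkne, hke⟩ :=
    hsep ⟨p, fun k => (hstepfull k).imp id And.left, hTL, hTR⟩
  rcases hstepfull k with h | ⟨_, hW'⟩
  · exact hkne h
  · exact hW' (hke ▸ heW)

end WGraph

namespace WGraph

variable {V : Type*} {G : WGraph V}

/-- A finite set of edges has a uniform positive lower bound on resistances. -/
lemma exists_resistance_bound {W : Set (Sym2 V)} (hfin : W.Finite)
    (hsub : W ⊆ G.edgeSet) :
    ∃ r : ℝ, 0 < r ∧ ∀ e ∈ W, ∀ a b : V, e = s(a, b) → r ≤ G.R a b := by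
  classical
  set f : Sym2 V → ℝ := Sym2.lift ⟨G.R, fun a b => G.Rsymm a b⟩ with hf
  have hfe : ∀ a b : V, f s(a, b) = G.R a b := fun a b => Sym2.lift_mk _ a b
  set s : Finset ℝ := insert 1 (hfin.toFinset.image f) with hs
  have hsne : s.Nonempty := ⟨1, by simp [hs]⟩
  refine ⟨s.min' hsne, ?_, ?_⟩
  · rw [Finset.lt_min'_iff]
    intro b hb
    rw [hs, Finset.mem_insert] at hb
    rcases hb with hb | hb
    · rw [hb]; norm_num
    · obtain ⟨e, he, hbe⟩ := Finset.mem_image.mp hb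
      rw [Set.Finite.mem_toFinset] at he
      obtain ⟨u, v, huv, hesv⟩ := hsub he
      rw [← hbe, hesv, hfe]
      exact G.Rpos u v huv
  · intro e he a b heab
    have h1 : f e ∈ s := by
      rw [hs, Finset.mem_insert]
      exact Or.inr (Finset.mem_image.mpr ⟨e, (Set.Finite.mem_toFinset _).mpr he, rfl⟩)
    have h2 := s.min'_le _ h1
    exact le_of_le_of_eq h2 (by rw [heab, hfe])
end WGraph

/-- in a weakly connected completion, disjoint compact sets are
separated by a finite edge set met by every path between them. -/
theorem weaklyConnected_separates_compacts {V : Type*} [MetricSpace V] [Countable V]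
    (G : WGraph V) (hmet : G.IsPathMetric) (hconn : G.Connected)
    (hw : G.WeaklyConnected)
    (U K : Set (UniformSpace.Completion V))
    (hU : IsCompact U) (hK : IsCompact K) (hdisj : Disjoint U K) :
    ∃ W : Set (Sym2 V), W.Finite ∧ W ⊆ G.edgeSet ∧
      ∀ x ∈ U, ∀ y ∈ K, ∀ γ : G.CPath x y, ∃ e ∈ W, γ.uses e := by
  classical
  have key : ∀ z ∈ U ×ˢ K, ∃ (W' : Set (Sym2 V)) (ε : ℝ), W'.Finite ∧ W' ⊆ G.edgeSet ∧
      0 < ε ∧ ∀ x' y' : UniformSpace.Completion V, dist z.1 x' < ε → dist z.2 y' < ε →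
        ∀ γ : G.CPath x' y', ∃ e ∈ W', γ.uses e := by
    rintro ⟨zx, zy⟩ hz
    rw [Set.mem_prod] at hz
    have hne : zx ≠ zy := by
      intro h
      exact Set.disjoint_left.mp hdisj hz.1 (h ▸ hz.2)
    obtain ⟨W', hfin, hsub, hsep⟩ := hw zx zy hne
    obtain ⟨r, hrpos, hr⟩ := WGraph.exists_resistance_bound hfin hsub
    refine ⟨W', r / 8, hfin, hsub, by positivity, fun x' y' hx' hy' γ => ?_⟩
    exact WGraph.separation_ball hmet hconn hrpos hr hsep hx' hy' γ
  choose Wz εz h1 h2 h3 h4 using key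
  obtain ⟨t, ht⟩ := (hU.prod hK).elim_nhds_subcover'
    (fun z hz => Metric.ball z.1 (εz z hz) ×ˢ Metric.ball z.2 (εz z hz))
    (fun z hz => prod_mem_nhds (Metric.ball_mem_nhds _ (h3 z hz))
      (Metric.ball_mem_nhds _ (h3 z hz)))
  refine ⟨⋃ z ∈ t, Wz z z.2, ?_, ?_, ?_⟩
  · exact t.finite_toSet.biUnion fun z _ => h1 z z.2
  · exact Set.iUnion₂_subset fun z _ => h2 z z.2
  · intro x hx y hy γ
    have hmem : (x, y) ∈ U ×ˢ K := ⟨hx, hy⟩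
    obtain ⟨z, hzt, hzball⟩ := Set.mem_iUnion₂.mp (ht hmem)
    rw [Set.mem_prod] at hzball
    obtain ⟨e, heW, huse⟩ := h4 z z.2 x y
      (by rw [dist_comm]; exact Metric.mem_ball.mp hzball.1)
      (by rw [dist_comm]; exact Metric.mem_ball.mp hzball.2) γ
    exact ⟨e, Set.mem_biUnion hzt heW, huse⟩
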